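/- Fix n ≥ 3, m ≥ 1, k ∈ {1,...,n-1}, β > 0 with β² < 4·4^m sin^{2m}(πk/n). Set λ = -4^m sin^{2m}(πk/n) and γ = √(-λ - β²/4). Then for any c₁, c₂ ∈ ℂ, the function X(t) = e^{-βt/2}(c₁ cos(γt) + c₂ sin(γt))·P_k solves X'' + βX' = (-1)^{m+1}M^m X for all t ∈ ℝ, and X(t) → 0 as t → ∞. -/

import Mathlib

/-- The discrete Laplacian circulant matrix `circ(-2,1,0,…,0,1)` over `ℂ`. -/
noncomputable def lapM (n : ℕ) [NeZero n] : Matrix (Fin n) (Fin n) ℂ :=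
  Matrix.of fun i j =>
    (if j = i + 1 then 1 else 0) + (if j = i - 1 then 1 else 0) + (if j = i then -2 else 0)

/-- The basis polygon `P_k = (1, ω^k, …, ω^{(n-1)k})` with `ω = e^{2πi/n}`. -/
noncomputable def Pvec (n k : ℕ) : Fin n → ℂ :=
  fun j => Complex.exp (2 * (Real.pi : ℂ) * Complex.I * (k : ℂ) * ((j : ℕ) : ℂ) / (n : ℂ))

open Complex

lemma pvec_eq' (n k : ℕ) [NeZero n] (j : Fin n) :
    Pvec n k j = Complex.exp (2 * (Real.pi : ℂ) * I * k / n) ^ (j : ℕ) := by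
  rw [Pvec, ← Complex.exp_nat_mul]
  congr 1
  ring

lemma omega_pow_n' (n k : ℕ) [NeZero n] :
    Complex.exp (2 * (Real.pi : ℂ) * I * k / n) ^ n = 1 := by
  rw [← Complex.exp_nat_mul]
  have hn : (n : ℂ) ≠ 0 := Nat.cast_ne_zero.mpr (NeZero.ne n)
  have : (n : ℂ) * (2 * (Real.pi : ℂ) * I * k / n) = (k : ℤ) * (2 * Real.pi * I) := by
    field_simp; norm_cast
  rw [this, Complex.exp_int_mul_two_pi_mul_I]

lemma lap_eig' (n k : ℕ) [NeZero n] (hn : 3 ≤ n) :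
    (lapM n).mulVec (Pvec n k)
      = (Complex.exp (2 * (Real.pi : ℂ) * I * k / n)
          + (Complex.exp (2 * (Real.pi : ℂ) * I * k / n))⁻¹ - 2) • Pvec n k := by
  set ω := Complex.exp (2 * (Real.pi : ℂ) * I * k / n) with hω
  have hωn : ω ^ n = 1 := omega_pow_n' n k
  have hmod : ∀ a : ℕ, ω ^ (a % n) = ω ^ a := fun a => (pow_eq_pow_mod a hωn).symm
  have hinv : ω ^ (n - 1) = ω⁻¹ := by
    apply eq_inv_of_mul_eq_one_left
    rw [← pow_succ, Nat.sub_add_cancel (by omega)]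
    exact hωn
  funext i
  have h1 : Pvec n k (i + 1) = ω * Pvec n k i := by
    rw [pvec_eq', pvec_eq', Fin.add_def, hmod, Fin.val_one' n, Nat.mod_eq_of_lt (by omega),
      pow_add, pow_one, mul_comm]
  have h2 : Pvec n k (i - 1) = ω⁻¹ * Pvec n k i := by
    rw [pvec_eq', pvec_eq', Fin.sub_def]
    show ω ^ ((n - ((1:Fin n):ℕ) + (i:ℕ)) % n) = _
    have h1n : 1 % n = 1 := Nat.mod_eq_of_lt (by omega)
    rw [Fin.val_one' n, h1n, hmod, pow_add, hinv]
  simp only [Matrix.mulVec, dotProduct, lapM, Matrix.of_apply, add_mul, ite_mul,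
    one_mul, zero_mul, Finset.sum_add_distrib, Finset.sum_ite_eq', Finset.mem_univ, if_true]
  rw [h1, h2]
  simp only [Pi.smul_apply, smul_eq_mul]
  ring

lemma mu_val' (n k : ℕ) [NeZero n] :
    Complex.exp (2 * (Real.pi : ℂ) * I * k / n)
      + (Complex.exp (2 * (Real.pi : ℂ) * I * k / n))⁻¹ - 2
      = (((-4 : ℝ) * Real.sin (Real.pi * k / n) ^ 2 : ℝ) : ℂ) := by
  have hz : (2 * (Real.pi : ℂ) * I * k / n) = ((2 * Real.pi * k / n : ℝ) : ℂ) * I := by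
    push_cast; ring
  rw [hz, ← Complex.exp_neg]
  have hcos : Complex.exp (((2 * Real.pi * k / n : ℝ) : ℂ) * I)
      + Complex.exp (-(((2 * Real.pi * k / n : ℝ) : ℂ) * I))
      = 2 * Complex.cos ((2 * Real.pi * k / n : ℝ) : ℂ) := by
    rw [Complex.cos]; ring
  rw [hcos, ← Complex.ofReal_cos]
  have : Real.cos (2 * Real.pi * k / n) = 1 - 2 * Real.sin (Real.pi * k / n) ^ 2 := by
    have h2 : 2 * Real.pi * k / n = 2 * (Real.pi * k / n) := by ring
    rw [h2, Real.cos_two_mul]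
    have := Real.sin_sq_add_cos_sq (Real.pi * k / n)
    nlinarith [this]
  rw [this]
  push_cast
  ring

lemma pow_eig' {n : ℕ} (A : Matrix (Fin n) (Fin n) ℂ) (v : Fin n → ℂ) (μ : ℂ)
    (h : A.mulVec v = μ • v) (m : ℕ) : (A ^ m).mulVec v = μ ^ m • v := by
  induction m with
  | zero => simp [Matrix.one_mulVec]
  | succ m ih =>
      rw [pow_succ, ← Matrix.mulVec_mulVec, h, Matrix.mulVec_smul, ih, smul_smul, pow_succ]
      ring_nf

lemma deriv_step1' (β γ : ℝ) (c₁ c₂ : ℂ) (t : ℝ) :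
    HasDerivAt (fun t : ℝ => Complex.exp (-(β : ℂ) * t / 2)
        * (c₁ * Real.cos (γ * t) + c₂ * Real.sin (γ * t)))
      (Complex.exp (-(β : ℂ) * t / 2)
        * ((-(β : ℂ)/2) * (c₁ * Real.cos (γ * t) + c₂ * Real.sin (γ * t))
          + (γ : ℂ) * (-c₁ * Real.sin (γ * t) + c₂ * Real.cos (γ * t)))) t := by
  have hlin : HasDerivAt (fun t : ℝ => -(β : ℂ) * t / 2) (-(β : ℂ)/2) t := by
    have h0 : HasDerivAt (fun t : ℝ => ((t : ℝ) : ℂ)) 1 t := (hasDerivAt_id t).ofReal_comp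
    simpa using (h0.const_mul (-(β : ℂ))).div_const 2
  have hexp := hlin.cexp
  have hγt : HasDerivAt (fun t : ℝ => γ * t) γ t := by
    simpa using (hasDerivAt_id t).const_mul γ
  have hcos : HasDerivAt (fun t : ℝ => ((Real.cos (γ * t) : ℝ) : ℂ))
      ((-Real.sin (γ * t) * γ : ℝ) : ℂ) t := hγt.cos.ofReal_comp
  have hsin : HasDerivAt (fun t : ℝ => ((Real.sin (γ * t) : ℝ) : ℂ))
      ((Real.cos (γ * t) * γ : ℝ) : ℂ) t := hγt.sin.ofReal_comp
  have hG := (hcos.const_mul c₁).add (hsin.const_mul c₂)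
  have := hexp.mul hG
  refine HasDerivAt.congr_deriv this ?_
  simp only [Pi.add_apply]
  push_cast
  ring

lemma deriv_step2' (β γ : ℝ) (c₁ c₂ : ℂ) (t : ℝ) :
    HasDerivAt (fun t : ℝ => Complex.exp (-(β : ℂ) * t / 2)
        * ((-(β : ℂ)/2) * (c₁ * Real.cos (γ * t) + c₂ * Real.sin (γ * t))
          + (γ : ℂ) * (-c₁ * Real.sin (γ * t) + c₂ * Real.cos (γ * t))))
      (Complex.exp (-(β : ℂ) * t / 2)
        * (((β : ℂ)^2/4 - (γ : ℂ)^2) * (c₁ * Real.cos (γ * t) + c₂ * Real.sin (γ * t))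
          - (β : ℂ) * (γ : ℂ) * (-c₁ * Real.sin (γ * t) + c₂ * Real.cos (γ * t)))) t := by
  have hlin : HasDerivAt (fun t : ℝ => -(β : ℂ) * t / 2) (-(β : ℂ)/2) t := by
    have h0 : HasDerivAt (fun t : ℝ => ((t : ℝ) : ℂ)) 1 t := (hasDerivAt_id t).ofReal_comp
    simpa using (h0.const_mul (-(β : ℂ))).div_const 2
  have hexp := hlin.cexp
  have hγt : HasDerivAt (fun t : ℝ => γ * t) γ t := by
    simpa using (hasDerivAt_id t).const_mul γ
  have hcos : HasDerivAt (fun t : ℝ => ((Real.cos (γ * t) : ℝ) : ℂ))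
      ((-Real.sin (γ * t) * γ : ℝ) : ℂ) t := hγt.cos.ofReal_comp
  have hsin : HasDerivAt (fun t : ℝ => ((Real.sin (γ * t) : ℝ) : ℂ))
      ((Real.cos (γ * t) * γ : ℝ) : ℂ) t := hγt.sin.ofReal_comp
  have hG := (hcos.const_mul c₁).add (hsin.const_mul c₂)
  have hH := (hsin.const_mul (-c₁)).add (hcos.const_mul c₂)
  have hInner := (hG.const_mul (-(β : ℂ)/2)).add (hH.const_mul ((γ : ℝ) : ℂ))
  have := hexp.mul hInner
  refine HasDerivAt.congr_deriv this ?_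
  simp only [Pi.add_apply]
  push_cast
  ring

/-- Underdamped mode solutions: with `λ = -4^m sin^{2m}(πk/n)`, `β² < -4λ` and
`γ = √(-λ - β²/4)`, `X(t) = e^{-βt/2}(c₁ cos(γt) + c₂ sin(γt)) • P_k` solves
`X'' + βX' = (-1)^{m+1} M^m X` and `X(t) → 0` as `t → ∞`. -/
theorem underdamped_mode_solution (n m k : ℕ) [NeZero n] (hn : 3 ≤ n) (hm : 1 ≤ m)
    (hk1 : 1 ≤ k) (hkn : k < n) (β : ℝ) (hβ : 0 < β)
    (hβ2 : β ^ 2 < 4 * ((4 : ℝ) ^ m * Real.sin (Real.pi * k / n) ^ (2 * m)))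
    (c₁ c₂ : ℂ) (lam γ : ℝ)
    (hlam : lam = -(4 : ℝ) ^ m * Real.sin (Real.pi * k / n) ^ (2 * m))
    (hγ : γ = Real.sqrt (-lam - β ^ 2 / 4))
    (X : ℝ → Fin n → ℂ)
    (hX : ∀ t : ℝ, X t
      = (Complex.exp (-(β : ℂ) * t / 2) * (c₁ * Real.cos (γ * t) + c₂ * Real.sin (γ * t)))
          • Pvec n k) :
    (∀ t : ℝ, deriv (deriv X) t + β • deriv X t
        = ((-1 : ℂ) ^ (m + 1) • (lapM n) ^ m).mulVec (X t)) ∧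
      Filter.Tendsto X Filter.atTop (nhds 0) := by
  -- abbreviations
  set f : ℝ → ℂ := fun t => Complex.exp (-(β : ℂ) * t / 2)
    * (c₁ * Real.cos (γ * t) + c₂ * Real.sin (γ * t)) with hf
  set f1 : ℝ → ℂ := fun t => Complex.exp (-(β : ℂ) * t / 2)
    * ((-(β : ℂ)/2) * (c₁ * Real.cos (γ * t) + c₂ * Real.sin (γ * t))
      + (γ : ℂ) * (-c₁ * Real.sin (γ * t) + c₂ * Real.cos (γ * t))) with hf1
  set f2 : ℝ → ℂ := fun t => Complex.exp (-(β : ℂ) * t / 2)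
    * (((β : ℂ)^2/4 - (γ : ℂ)^2) * (c₁ * Real.cos (γ * t) + c₂ * Real.sin (γ * t))
      - (β : ℂ) * (γ : ℂ) * (-c₁ * Real.sin (γ * t) + c₂ * Real.cos (γ * t))) with hf2
  have hXf : X = fun t => f t • Pvec n k := funext fun t => hX t
  have hγ2 : γ ^ 2 = -lam - β ^ 2 / 4 := by
    rw [hγ, sq]
    apply Real.mul_self_sqrt
    rw [hlam]
    nlinarith [hβ2]
  -- derivatives
  have hdX : deriv X = fun t => f1 t • Pvec n k := by
    funext t
    rw [hXf]
    exact ((deriv_step1' β γ c₁ c₂ t).smul_const (Pvec n k)).deriv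
  have hddX : ∀ t, deriv (deriv X) t = f2 t • Pvec n k := by
    intro t
    rw [hdX]
    exact ((deriv_step2' β γ c₁ c₂ t).smul_const (Pvec n k)).deriv
  -- eigenvalue
  have heig : ((-1 : ℂ) ^ (m + 1) • (lapM n) ^ m).mulVec (Pvec n k)
      = ((lam : ℝ) : ℂ) • Pvec n k := by
    have h1 : (lapM n).mulVec (Pvec n k)
        = (((-4 : ℝ) * Real.sin (Real.pi * k / n) ^ 2 : ℝ) : ℂ) • Pvec n k := by
      rw [lap_eig' n k hn, mu_val' n k]
    have h2 := pow_eig' (lapM n) (Pvec n k) _ h1 m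
    rw [Matrix.smul_mulVec, h2, smul_smul]
    congr 1
    have hR : (-1 : ℝ) ^ (m + 1) * ((-4 : ℝ) * Real.sin (Real.pi * k / n) ^ 2) ^ m = lam := by
      rw [hlam]
      have h4 : ((-4 : ℝ) * Real.sin (Real.pi * k / n) ^ 2) ^ m
          = (-1 : ℝ) ^ m * (4 ^ m * (Real.sin (Real.pi * k / n) ^ 2) ^ m) := by
        rw [show (-4 : ℝ) * Real.sin (Real.pi * k / n) ^ 2
            = (-1) * (4 * Real.sin (Real.pi * k / n) ^ 2) by ring, mul_pow, mul_pow]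
      rw [h4, pow_mul, ← mul_assoc, ← pow_add]
      have hme : m + 1 + m = 2 * m + 1 := by ring
      rw [hme, pow_succ, pow_mul]
      norm_num
    exact_mod_cast hR
  constructor
  · intro t
    rw [hddX t, hdX, hXf]
    simp only
    rw [Matrix.mulVec_smul, heig, smul_smul]
    have hsm : (β : ℝ) • (f1 t • Pvec n k) = ((β : ℂ) * f1 t) • Pvec n k := by
      rw [← smul_assoc, Complex.real_smul]
    rw [hsm, ← add_smul]
    congr 1
    have hγC : ((γ : ℝ) : ℂ) ^ 2 = -((lam : ℝ) : ℂ) - ((β : ℝ) : ℂ) ^ 2 / 4 := by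
      exact_mod_cast congrArg (fun x : ℝ => (x : ℂ)) hγ2
    rw [hf, hf1, hf2]
    simp only
    linear_combination (-(Complex.exp (-(β : ℂ) * t / 2)
      * (c₁ * Real.cos (γ * t) + c₂ * Real.sin (γ * t)))) * hγC
  · rw [hXf]
    have hf0 : Filter.Tendsto f Filter.atTop (nhds 0) := by
      refine squeeze_zero_norm (a := fun t => (‖c₁‖ + ‖c₂‖) * Real.exp (-(β/2) * t)) ?_ ?_
      · intro t
        rw [hf]
        simp only [norm_mul]
        have h1 : ‖Complex.exp (-(β : ℂ) * t / 2)‖ = Real.exp (-(β/2) * t) := by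
          rw [Complex.norm_exp]
          congr 1
          simp [Complex.div_re, Complex.normSq]
          ring
        rw [h1, mul_comm]
        apply mul_le_mul_of_nonneg_right _ (Real.exp_pos _).le
        calc ‖c₁ * (Real.cos (γ * t) : ℂ) + c₂ * (Real.sin (γ * t) : ℂ)‖
            ≤ ‖c₁ * (Real.cos (γ * t) : ℂ)‖ + ‖c₂ * (Real.sin (γ * t) : ℂ)‖ := norm_add_le _ _
          _ ≤ ‖c₁‖ * 1 + ‖c₂‖ * 1 := by
              rw [norm_mul, norm_mul]
              gcongr
              · rw [Complex.norm_real, Real.norm_eq_abs]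
                exact Real.abs_cos_le_one _
              · rw [Complex.norm_real, Real.norm_eq_abs]
                exact Real.abs_sin_le_one _
          _ = ‖c₁‖ + ‖c₂‖ := by ring
      · have hexp : Filter.Tendsto (fun t : ℝ => Real.exp (-(β/2) * t))
            Filter.atTop (nhds 0) := by
          apply Real.tendsto_exp_atBot.comp
          exact Filter.Tendsto.const_mul_atTop_of_neg (by linarith : -(β/2) < 0) Filter.tendsto_id
        simpa using hexp.const_mul (‖c₁‖ + ‖c₂‖)
    have := hf0.smul_const (Pvec n k)
    simpa using this
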